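/- For all n ≥ 0, c_1⁴·α^n + c_2⁴·β^n + c_3⁴·γ^n + c_4⁴·δ^n = (1/563²)·W_n, where W_n is the Tetranacci-type sequence with W_0 = 3052, W_1 = 4658, W_2 = 8804, W_3 = 16451 and W_n = W_{n−1} + W_{n−2} + W_{n−3} + W_{n−4} for n ≥ 4. -/

import Mathlib

/-- A Tetranacci-type sequence. -/
def seqW : ℕ → ℤ
  | 0 => 3052
  | 1 => 4658
  | 2 => 8804
  | 3 => 16451
  | n + 4 => seqW (n + 3) + seqW (n + 2) + seqW (n + 1) + seqW n

theorem tetra_c_fourth (α β γ δ : ℂ)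
    (hα : α ^ 4 - α ^ 3 - α ^ 2 - α - 1 = 0) (hβ : β ^ 4 - β ^ 3 - β ^ 2 - β - 1 = 0)
    (hγ : γ ^ 4 - γ ^ 3 - γ ^ 2 - γ - 1 = 0) (hδ : δ ^ 4 - δ ^ 3 - δ ^ 2 - δ - 1 = 0)
    (hαβ : α ≠ β) (hαγ : α ≠ γ) (hαδ : α ≠ δ) (hβγ : β ≠ γ) (hβδ : β ≠ δ) (hγδ : γ ≠ δ)
    (c₁ c₂ c₃ c₄ : ℂ)
    (hc₁ : c₁ = α ^ 2 / ((α - β) * (α - γ) * (α - δ)))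
    (hc₂ : c₂ = β ^ 2 / ((β - α) * (β - γ) * (β - δ)))
    (hc₃ : c₃ = γ ^ 2 / ((γ - α) * (γ - β) * (γ - δ)))
    (hc₄ : c₄ = δ ^ 2 / ((δ - α) * (δ - β) * (δ - γ))) (n : ℕ) :
    c₁ ^ 4 * α ^ n + c₂ ^ 4 * β ^ n + c₃ ^ 4 * γ ^ n + c₄ ^ 4 * δ ^ n
      = (1 / 563 ^ 2 : ℂ) * seqW n := by
  have hab : α - β ≠ 0 := sub_ne_zero.mpr hαβ
  have hac : α - γ ≠ 0 := sub_ne_zero.mpr hαγ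
  have had : α - δ ≠ 0 := sub_ne_zero.mpr hαδ
  have hbc : β - γ ≠ 0 := sub_ne_zero.mpr hβγ
  have hbd : β - δ ≠ 0 := sub_ne_zero.mpr hβδ
  have hcd : γ - δ ≠ 0 := sub_ne_zero.mpr hγδ
  have qab : α^3 + α^2*β + α*β^2 + β^3 - α^2 - α*β - β^2 - α - β - 1 = 0 :=
    mul_left_cancel₀ hab (by linear_combination hα - hβ)
  have qac : α^3 + α^2*γ + α*γ^2 + γ^3 - α^2 - α*γ - γ^2 - α - γ - 1 = 0 :=
    mul_left_cancel₀ hac (by linear_combination hα - hγ)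
  have qad : α^3 + α^2*δ + α*δ^2 + δ^3 - α^2 - α*δ - δ^2 - α - δ - 1 = 0 :=
    mul_left_cancel₀ had (by linear_combination hα - hδ)
  have rabc : α^2 + α*β + α*γ + β^2 + β*γ + γ^2 - α - β - γ - 1 = 0 :=
    mul_left_cancel₀ hbc (by linear_combination qab - qac)
  have rabd : α^2 + α*β + α*δ + β^2 + β*δ + δ^2 - α - β - δ - 1 = 0 :=
    mul_left_cancel₀ hbd (by linear_combination qab - qad)
  have he1 : α + β + γ + δ = 1 :=
    mul_left_cancel₀ hcd (by linear_combination rabc - rabd)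
  have he2 : α*β + α*γ + α*δ + β*γ + β*δ + γ*δ = -1 := by
    linear_combination -rabc + (α+β+γ)*he1
  have he3 : α*β*γ + α*β*δ + α*γ*δ + β*γ*δ = 1 := by
    linear_combination qab + (α*β-(α+β)^2)*he1 + (α+β)*he2
  have hp2 : α^2 + β^2 + γ^2 + δ^2 = 3 := by
    linear_combination (α+β+γ+δ+1)*he1 - 2*he2
  have hp3 : α^3 + β^3 + γ^3 + δ^3 = 7 := by
    linear_combination ((α+β+γ+δ)^2+(α+β+γ+δ)+4)*he1 - 3*(α+β+γ+δ)*he2 + 3*he3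
  have hD1 : (α - β) * (α - γ) * (α - δ) = (4*α^3 - 3*α^2 - 2*α - 1) := by
    linear_combination (-3*α^2)*he1 + 2*α*he2 - he3
  have hP1 : (4*α^3 - 3*α^2 - 2*α - 1) * (16*α^3 - 103*α^2 + 157*α + 10) = 563 := by
    linear_combination (64*α^2 - 396*α + 573)*hα
  have hPn1 : (4*α^3 - 3*α^2 - 2*α - 1) ≠ 0 := by
    intro h
    rw [h, zero_mul] at hP1
    exact absurd hP1 (by norm_num)
  have hc1' : (563:ℂ) * c₁ = α^2 * (16*α^3 - 103*α^2 + 157*α + 10) := by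
    rw [hc₁, hD1]
    rw [mul_div_assoc', div_eq_iff hPn1]
    linear_combination -α^2 * hP1
  have hD2 : (β - α) * (β - γ) * (β - δ) = (4*β^3 - 3*β^2 - 2*β - 1) := by
    linear_combination (-3*β^2)*he1 + 2*β*he2 - he3
  have hP2 : (4*β^3 - 3*β^2 - 2*β - 1) * (16*β^3 - 103*β^2 + 157*β + 10) = 563 := by
    linear_combination (64*β^2 - 396*β + 573)*hβ
  have hPn2 : (4*β^3 - 3*β^2 - 2*β - 1) ≠ 0 := by
    intro h
    rw [h, zero_mul] at hP2
    exact absurd hP2 (by norm_num)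
  have hc2' : (563:ℂ) * c₂ = β^2 * (16*β^3 - 103*β^2 + 157*β + 10) := by
    rw [hc₂, hD2]
    rw [mul_div_assoc', div_eq_iff hPn2]
    linear_combination -β^2 * hP2
  have hD3 : (γ - α) * (γ - β) * (γ - δ) = (4*γ^3 - 3*γ^2 - 2*γ - 1) := by
    linear_combination (-3*γ^2)*he1 + 2*γ*he2 - he3
  have hP3 : (4*γ^3 - 3*γ^2 - 2*γ - 1) * (16*γ^3 - 103*γ^2 + 157*γ + 10) = 563 := by
    linear_combination (64*γ^2 - 396*γ + 573)*hγ
  have hPn3 : (4*γ^3 - 3*γ^2 - 2*γ - 1) ≠ 0 := by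
    intro h
    rw [h, zero_mul] at hP3
    exact absurd hP3 (by norm_num)
  have hc3' : (563:ℂ) * c₃ = γ^2 * (16*γ^3 - 103*γ^2 + 157*γ + 10) := by
    rw [hc₃, hD3]
    rw [mul_div_assoc', div_eq_iff hPn3]
    linear_combination -γ^2 * hP3
  have hD4 : (δ - α) * (δ - β) * (δ - γ) = (4*δ^3 - 3*δ^2 - 2*δ - 1) := by
    linear_combination (-3*δ^2)*he1 + 2*δ*he2 - he3
  have hP4 : (4*δ^3 - 3*δ^2 - 2*δ - 1) * (16*δ^3 - 103*δ^2 + 157*δ + 10) = 563 := by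
    linear_combination (64*δ^2 - 396*δ + 573)*hδ
  have hPn4 : (4*δ^3 - 3*δ^2 - 2*δ - 1) ≠ 0 := by
    intro h
    rw [h, zero_mul] at hP4
    exact absurd hP4 (by norm_num)
  have hc4' : (563:ℂ) * c₄ = δ^2 * (16*δ^3 - 103*δ^2 + 157*δ + 10) := by
    rw [hc₄, hD4]
    rw [mul_div_assoc', div_eq_iff hPn4]
    linear_combination -δ^2 * hP4
  have h563 : ((563:ℂ)^4) ≠ 0 := by norm_num
  induction n using Nat.strong_induction_on with
  | _ n ih =>
    match n, ih with
    | 0, _ =>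
      refine mul_left_cancel₀ h563 ?_
      have expand : (563:ℂ)^4 * (c₁ ^ 4 * α ^ 0 + c₂ ^ 4 * β ^ 0 + c₃ ^ 4 * γ ^ 0 + c₄ ^ 4 * δ ^ 0)
          = ((563:ℂ)*c₁)^4 * α ^ 0 + ((563:ℂ)*c₂)^4 * β ^ 0 + ((563:ℂ)*c₃)^4 * γ ^ 0 + ((563:ℂ)*c₄)^4 * δ ^ 0 := by
        ring
      rw [expand, hc1', hc2', hc3', hc4']
      have hw : (seqW 0 : ℂ) = 3052 := by norm_num [seqW]
      rw [hw]
      linear_combination ((65536)*α^16 + (-1622016)*α^15 + (17311232)*α^14 + (-103693248)*α^13 + (379106785)*α^12 + (-857396107)*α^11 + (1146357140)*α^10 + (-784799306)*α^9 + (195559873)*α^8 + (-164823880)*α^7 + (406671227)*α^6 + (-346764086)*α^5 + (90653134)*α^4 + (-14263605)*α^3 + (136296670)*α^2 + (-134077887)*α + (78608312))*hα + ((65536)*β^16 + (-1622016)*β^15 + (17311232)*β^14 + (-103693248)*β^13 + (379106785)*β^12 + (-857396107)*β^11 + (1146357140)*β^10 + (-784799306)*β^9 + (195559873)*β^8 +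 (-164823880)*β^7 + (406671227)*β^6 + (-346764086)*β^5 + (90653134)*β^4 + (-14263605)*β^3 + (136296670)*β^2 + (-134077887)*β + (78608312))*hβ + ((65536)*γ^16 + (-1622016)*γ^15 + (17311232)*γ^14 + (-103693248)*γ^13 + (379106785)*γ^12 + (-857396107)*γ^11 + (1146357140)*γ^10 + (-784799306)*γ^9 + (195559873)*γ^8 + (-164823880)*γ^7 + (406671227)*γ^6 + (-346764086)*γ^5 + (90653134)*γ^4 + (-14263605)*γ^3 + (136296670)*γ^2 + (-134077887)*γ + (78608312))*hγ + ((65536)*δ^16 + (-1622016)*δ^15 + (17311232)*δ^14 + (-103693248)*δ^13 + (379106785)*δ^12 + (-857396107)*δ^11 + (1146357140)*δ^10 + (-784799306)*δ^9 + (195559873)*δ^8 + (-164823880)*δ^7 + (406671227)*δ^6 + (-346764086)*δ^5 + (90653134)*δ^4 + (-14263605)*δ^3 + (136296670)*δ^2 + (-134077887)*δ + (78608312))*hδ + (66563490)*hp3 + (80827095)*hp2 + (-55469575)*he1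
    | 1, _ =>
      refine mul_left_cancel₀ h563 ?_
      have expand : (563:ℂ)^4 * (c₁ ^ 4 * α ^ 1 + c₂ ^ 4 * β ^ 1 + c₃ ^ 4 * γ ^ 1 + c₄ ^ 4 * δ ^ 1)
          = ((563:ℂ)*c₁)^4 * α ^ 1 + ((563:ℂ)*c₂)^4 * β ^ 1 + ((563:ℂ)*c₃)^4 * γ ^ 1 + ((563:ℂ)*c₄)^4 * δ ^ 1 := by
        ring
      rw [expand, hc1', hc2', hc3', hc4']
      have hw : (seqW 1 : ℂ) = 4658 := by norm_num [seqW]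
      rw [hw]
      linear_combination ((65536)*α^17 + (-1622016)*α^16 + (17311232)*α^15 + (-103693248)*α^14 + (379106785)*α^13 + (-857396107)*α^12 + (1146357140)*α^11 + (-784799306)*α^10 + (195559873)*α^9 + (-164823880)*α^8 + (406671227)*α^7 + (-346764086)*α^6 + (90653134)*α^5 + (-14263605)*α^4 + (136296670)*α^3 + (-134077887)*α^2 + (78608312)*α + (66563490))*hα + ((65536)*β^17 + (-1622016)*β^16 + (17311232)*β^15 + (-103693248)*β^14 + (379106785)*β^13 + (-857396107)*β^12 + (1146357140)*β^11 + (-784799306)*β^10 + (195559873)*β^9 + (-164823880)*β^8 + (406671227)*β^7 + (-346764086)*β^6 + (90653134)*β^5 + (-14263605)*β^4 + (136296670)*β^3 + (-134077887)*β^2 + (78608312)*β + (66563490))*hβ + ((65536)*γ^17 + (-1622016)*γ^16 + (17311232)*γ^15 + (-103693248)*γ^14 + (379106785)*γ^13 + (-857396107)*γ^12 + (1146357140)*γ^11 + (-784799306)*γ^10 + (195559873)*γ^9 + (-164823880)*γ^8 + (406671227)*γ^7 + (-346764086)*γ^6 + (90653134)*γ^5 + (-14263605)*γ^4 + (136296670)*γ^3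 + (-134077887)*γ^2 + (78608312)*γ + (66563490))*hγ + ((65536)*δ^17 + (-1622016)*δ^16 + (17311232)*δ^15 + (-103693248)*δ^14 + (379106785)*δ^13 + (-857396107)*δ^12 + (1146357140)*δ^11 + (-784799306)*δ^10 + (195559873)*δ^9 + (-164823880)*δ^8 + (406671227)*δ^7 + (-346764086)*δ^6 + (90653134)*δ^5 + (-14263605)*δ^4 + (136296670)*δ^3 + (-134077887)*δ^2 + (78608312)*δ + (66563490))*hδ + (147390585)*hp3 + (11093915)*hp2 + (145171802)*he1
    | 2, _ =>
      refine mul_left_cancel₀ h563 ?_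
      have expand : (563:ℂ)^4 * (c₁ ^ 4 * α ^ 2 + c₂ ^ 4 * β ^ 2 + c₃ ^ 4 * γ ^ 2 + c₄ ^ 4 * δ ^ 2)
          = ((563:ℂ)*c₁)^4 * α ^ 2 + ((563:ℂ)*c₂)^4 * β ^ 2 + ((563:ℂ)*c₃)^4 * γ ^ 2 + ((563:ℂ)*c₄)^4 * δ ^ 2 := by
        ring
      rw [expand, hc1', hc2', hc3', hc4']
      have hw : (seqW 2 : ℂ) = 8804 := by norm_num [seqW]
      rw [hw]
      linear_combination ((65536)*α^18 + (-1622016)*α^17 + (17311232)*α^16 + (-103693248)*α^15 + (379106785)*α^14 + (-857396107)*α^13 + (1146357140)*α^12 + (-784799306)*α^11 + (195559873)*α^10 + (-164823880)*α^9 + (406671227)*α^8 + (-346764086)*α^7 + (90653134)*α^6 + (-14263605)*α^5 + (136296670)*α^4 + (-134077887)*α^3 + (78608312)*α^2 + (66563490)*α + (147390585))*hα + ((65536)*β^18 + (-1622016)*β^17 + (17311232)*β^16 + (-103693248)*β^15 + (379106785)*β^14 + (-857396107)*β^13 + (1146357140)*β^12 + (-784799306)*β^11 + (195559873)*β^10 +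 (-164823880)*β^9 + (406671227)*β^8 + (-346764086)*β^7 + (90653134)*β^6 + (-14263605)*β^5 + (136296670)*β^4 + (-134077887)*β^3 + (78608312)*β^2 + (66563490)*β + (147390585))*hβ + ((65536)*γ^18 + (-1622016)*γ^17 + (17311232)*γ^16 + (-103693248)*γ^15 + (379106785)*γ^14 + (-857396107)*γ^13 + (1146357140)*γ^12 + (-784799306)*γ^11 + (195559873)*γ^10 + (-164823880)*γ^9 + (406671227)*γ^8 + (-346764086)*γ^7 + (90653134)*γ^6 + (-14263605)*γ^5 + (136296670)*γ^4 + (-134077887)*γ^3 + (78608312)*γ^2 + (66563490)*γ + (147390585))*hγ + ((65536)*δ^18 + (-1622016)*δ^17 + (17311232)*δ^16 + (-103693248)*δ^15 + (379106785)*δ^14 + (-857396107)*δ^13 + (1146357140)*δ^12 + (-784799306)*δ^11 + (195559873)*δ^10 + (-164823880)*δ^9 + (406671227)*δ^8 + (-346764086)*δ^7 + (90653134)*δ^6 + (-14263605)*δ^5 + (136296670)*δ^4 + (-134077887)*δ^3 + (78608312)*δ^2 + (66563490)*δ + (147390585))*hδ + (158484500)*hp3 + (292562387)*hp2 + (2139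54075)*he1
    | 3, _ =>
      refine mul_left_cancel₀ h563 ?_
      have expand : (563:ℂ)^4 * (c₁ ^ 4 * α ^ 3 + c₂ ^ 4 * β ^ 3 + c₃ ^ 4 * γ ^ 3 + c₄ ^ 4 * δ ^ 3)
          = ((563:ℂ)*c₁)^4 * α ^ 3 + ((563:ℂ)*c₂)^4 * β ^ 3 + ((563:ℂ)*c₃)^4 * γ ^ 3 + ((563:ℂ)*c₄)^4 * δ ^ 3 := by
        ring
      rw [expand, hc1', hc2', hc3', hc4']
      have hw : (seqW 3 : ℂ) = 16451 := by norm_num [seqW]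
      rw [hw]
      linear_combination ((65536)*α^19 + (-1622016)*α^18 + (17311232)*α^17 + (-103693248)*α^16 + (379106785)*α^15 + (-857396107)*α^14 + (1146357140)*α^13 + (-784799306)*α^12 + (195559873)*α^11 + (-164823880)*α^10 + (406671227)*α^9 + (-346764086)*α^8 + (90653134)*α^7 + (-14263605)*α^6 + (136296670)*α^5 + (-134077887)*α^4 + (78608312)*α^3 + (66563490)*α^2 + (147390585)*α + (158484500))*hα + ((65536)*β^19 + (-1622016)*β^18 + (17311232)*β^17 + (-103693248)*β^16 + (379106785)*β^15 + (-857396107)*β^14 + (1146357140)*β^13 + (-784799306)*β^12 + (195559873)*β^11 + (-164823880)*β^10 + (406671227)*β^9 + (-346764086)*β^8 + (90653134)*β^7 + (-14263605)*β^6 + (136296670)*β^5 + (-134077887)*β^4 + (78608312)*β^3 + (66563490)*β^2 + (147390585)*β + (158484500))*hβ + ((65536)*γ^19 + (-1622016)*γ^18 + (17311232)*γ^17 + (-103693248)*γ^16 + (379106785)*γ^15 + (-857396107)*γ^14 + (1146357140)*γ^13 + (-784799306)*γ^12 + (195559873)*γ^11 + (-164823880)*γ^10 + (406671227)*γ^9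 + (-346764086)*γ^8 + (90653134)*γ^7 + (-14263605)*γ^6 + (136296670)*γ^5 + (-134077887)*γ^4 + (78608312)*γ^3 + (66563490)*γ^2 + (147390585)*γ + (158484500))*hγ + ((65536)*δ^19 + (-1622016)*δ^18 + (17311232)*δ^17 + (-103693248)*δ^16 + (379106785)*δ^15 + (-857396107)*δ^14 + (1146357140)*δ^13 + (-784799306)*δ^12 + (195559873)*δ^11 + (-164823880)*δ^10 + (406671227)*δ^9 + (-346764086)*δ^8 + (90653134)*δ^7 + (-14263605)*δ^6 + (136296670)*δ^5 + (-134077887)*δ^4 + (78608312)*δ^3 + (66563490)*δ^2 + (147390585)*δ + (158484500))*hδ + (451046887)*hp3 + (372438575)*hp2 + (305875085)*he1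
    | (m+4), ih =>
      have i3 := ih (m+3) (by omega)
      have i2 := ih (m+2) (by omega)
      have i1 := ih (m+1) (by omega)
      have i0 := ih m (by omega)
      have hw : (seqW (m+4) : ℂ) = seqW (m+3) + seqW (m+2) + seqW (m+1) + seqW m := by
        norm_num [seqW]
      rw [hw]
      linear_combination i3 + i2 + i1 + i0 + (c₁^4*α^m)*hα + (c₂^4*β^m)*hβ + (c₃^4*γ^m)*hγ + (c₄^4*δ^m)*hδ
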